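/- arXiv:1309.7526 — 2 statements merged into one kernel-verified Lean document; each statement's English description precedes it below -/
import Mathlib

section
/- Let d ≥ 1 and N ∈ ℕ. For every y ∈ ℝ^{d+1} and every α ∈ ℕ^{d+1} with |α| ≤ N, Σ_{γ ∈ ℕ^{d+1}, |γ| = N} (N!/γ!) (−γ)_α y^γ = (−N)_{|α|} · (y_1+⋯+y_{d+1})^{N−|α|} · y^α. -/
open Finset

/-- Pochhammer symbol `(a)_k = a (a+1) ⋯ (a+k-1)`. -/
noncomputable def poch (a : ℝ) : ℕ → ℝ
  | 0 => 1
  | k + 1 => poch a k * (a + k)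

/-- Multi-index Pochhammer `(x)_γ = ∏ i (x i)_{γ i}`. -/
noncomputable def pochV {m : ℕ} (x : Fin m → ℝ) (γ : Fin m → ℕ) : ℝ :=
  ∏ i, poch (x i) (γ i)

/-- Multi-index factorial `γ! = ∏ i (γ i)!` (as a real number). -/
noncomputable def mfact {m : ℕ} (γ : Fin m → ℕ) : ℝ :=
  ∏ i, (Nat.factorial (γ i) : ℝ)

/-- Shifted monomial `m_γ(x) = (-1)^{|γ|} (-x)_γ`. -/
noncomputable def mono {m : ℕ} (γ : Fin m → ℕ) (x : Fin m → ℝ) : ℝ :=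
  (-1 : ℝ) ^ (∑ i, γ i) * pochV (fun i => -(x i)) γ

/-- `Z_N^{d+1} = {α ∈ ℕ^{d+1} : |α| = N}` as a finite set. -/
def ZN (d N : ℕ) : Finset (Fin (d + 1) → ℕ) :=
  (Fintype.piFinset fun _ => Finset.range (N + 1)).filter fun α => ∑ i, α i = N

/-- `{ν ∈ ℕ^d : |ν| = n}` as a finite set. -/
def idxSet (d n : ℕ) : Finset (Fin d → ℕ) :=
  (Fintype.piFinset fun _ => Finset.range (n + 1)).filter fun ν => ∑ i, ν i = n

/-- The finite set `{γ ∈ ℕ^m : γ ≤ α}`. -/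
def below {m : ℕ} (α : Fin m → ℕ) : Finset (Fin m → ℕ) :=
  Fintype.piFinset fun i => Finset.range (α i + 1)

/-- Monic Hahn polynomial `Q_α(x; κ, N)`. -/
noncomputable def monicQ (d N : ℕ) (κ : Fin (d + 1) → ℝ) (α : Fin (d + 1) → ℕ)
    (x : Fin (d + 1) → ℝ) : ℝ :=
  poch (-(N : ℝ)) (∑ i, α i) * pochV (fun i => κ i + 1) α /
      poch ((∑ i, κ i) + d + (∑ i, α i)) (∑ i, α i) *
    ∑ γ ∈ below α,
      pochV (fun i => -(α i : ℝ)) γ * poch ((∑ i, κ i) + d + (∑ i, α i)) (∑ i, γ i) *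
          (-1 : ℝ) ^ (∑ i, γ i) /
          (mfact γ * pochV (fun i => κ i + 1) γ * poch (-(N : ℝ)) (∑ i, γ i)) *
        mono γ x

/-- One-variable Hahn polynomial `Q_n(x; a, b, M)` (a `₃F₂` sum). -/
noncomputable def hahn1 (n : ℕ) (x a b M : ℝ) : ℝ :=
  ∑ k ∈ Finset.range (n + 1),
    poch (-(n : ℝ)) k * poch ((n : ℝ) + a + b + 1) k * poch (-x) k /
      (poch (a + 1) k * poch (-M) k * (Nat.factorial k : ℝ))

/-- The parameter `a_j = κ_{j+1}+⋯+κ_{d+1} + 2|ν^{j+1}| + d - j` (1-based `j`). -/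
noncomputable def aj (d : ℕ) (κ : Fin (d + 1) → ℝ) (ν : Fin d → ℕ) (j : Fin d) : ℝ :=
  (∑ i ∈ Finset.univ.filter (fun i : Fin (d + 1) => (j : ℕ) < (i : ℕ)), κ i) +
    2 * (∑ i ∈ Finset.univ.filter (fun i : Fin d => (j : ℕ) < (i : ℕ)), (ν i : ℝ)) +
    ((d - 1 - (j : ℕ) : ℕ) : ℝ)

/-- `|x_{j-1}| = x_1 + ⋯ + x_{j-1}` (1-based `j`). -/
noncomputable def sumLt (d : ℕ) (x : Fin (d + 1) → ℕ) (j : Fin d) : ℝ :=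
  ∑ i ∈ Finset.univ.filter (fun i : Fin (d + 1) => (i : ℕ) < (j : ℕ)), (x i : ℝ)

/-- `|ν^{j+1}| = ν_{j+1} + ⋯ + ν_d` (1-based `j`). -/
noncomputable def sumGt (d : ℕ) (ν : Fin d → ℕ) (j : Fin d) : ℝ :=
  ∑ i ∈ Finset.univ.filter (fun i : Fin d => (j : ℕ) < (i : ℕ)), (ν i : ℝ)

/-- Hahn polynomial of `d` variables `H_ν(x; κ, N)`. -/
noncomputable def hahnH (d N : ℕ) (κ : Fin (d + 1) → ℝ) (ν : Fin d → ℕ)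
    (x : Fin (d + 1) → ℕ) : ℝ :=
  (-1 : ℝ) ^ (∑ i, ν i) / poch (-(N : ℝ)) (∑ i, ν i) *
    ∏ j : Fin d,
      poch (κ j.castSucc + 1) (ν j) / poch (aj d κ ν j + 1) (ν j) *
        poch (-(N : ℝ) + sumLt d x j + sumGt d ν j) (ν j) *
        hahn1 (ν j) (x j.castSucc : ℝ) (κ j.castSucc) (aj d κ ν j)
          ((N : ℝ) - sumLt d x j - sumGt d ν j)

/-- Squared norm `B_ν(κ, N)` of the Hahn polynomial `H_ν(·; κ, N)`. -/
noncomputable def Bnorm (d N : ℕ) (κ : Fin (d + 1) → ℝ) (ν : Fin d → ℕ) : ℝ :=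
  (-1 : ℝ) ^ (∑ i, ν i) * poch ((∑ i, κ i) + d + 1) (N + ∑ i, ν i) /
      (poch (-(N : ℝ)) (∑ i, ν i) * poch ((∑ i, κ i) + d + 1) N *
        poch ((∑ i, κ i) + d + 1) (2 * ∑ i, ν i)) *
    ∏ j : Fin d,
      poch (κ j.castSucc + aj d κ ν j + 1) (2 * ν j) * poch (κ j.castSucc + 1) (ν j) *
          (Nat.factorial (ν j) : ℝ) /
        (poch (κ j.castSucc + aj d κ ν j + 1) (ν j) * poch (aj d κ ν j + 1) (ν j))

/-- Projection `Q_{α,n}(x; κ, N)` of `m_α/(κ+1)_α` onto the space of degree `n`. -/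
noncomputable def monicQn (d N : ℕ) (κ : Fin (d + 1) → ℝ) (α : Fin (d + 1) → ℕ) (n : ℕ)
    (x : Fin (d + 1) → ℝ) : ℝ :=
  (-1 : ℝ) ^ (∑ i, α i) * poch (-(N : ℝ)) (∑ i, α i) * poch ((∑ i, κ i) + d + 1) (2 * n) /
      (poch (-(N : ℝ)) n * poch ((∑ i, κ i) + d + 1) ((∑ i, α i) + n)) *
    ∑ β ∈ ZN d n,
      pochV (fun i => -(α i : ℝ)) β / (mfact β * pochV (fun i => κ i + 1) β) *
        monicQ d N κ β x

/-- The kernel `E_k(x, y; κ) = Σ_{|γ|=k} (-x)_γ (-y)_γ / (γ! (κ+1)_γ)`. -/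
noncomputable def Efun (d : ℕ) (κ : Fin (d + 1) → ℝ) (x y : Fin (d + 1) → ℕ) (k : ℕ) : ℝ :=
  ∑ γ ∈ ZN d k,
    pochV (fun i => -(x i : ℝ)) γ * pochV (fun i => -(y i : ℝ)) γ /
      (mfact γ * pochV (fun i => κ i + 1) γ)

/-- Monic Jacobi polynomial on the simplex `R_α^κ(x)`. -/
noncomputable def jacobiR (d : ℕ) (κ : Fin (d + 1) → ℝ) (α : Fin (d + 1) → ℕ)
    (x : Fin d → ℝ) : ℝ :=
  (-1 : ℝ) ^ (∑ i, α i) * pochV (fun i => κ i + 1) α /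
      poch ((∑ i, κ i) + d + (∑ i, α i)) (∑ i, α i) *
    ∑ γ ∈ below α,
      pochV (fun i => -(α i : ℝ)) γ * poch ((∑ i, κ i) + d + (∑ i, α i)) (∑ i, γ i) /
          (pochV (fun i => κ i + 1) γ * mfact γ) *
        ∏ i, (Fin.snoc x (1 - ∑ i, x i) : Fin (d + 1) → ℝ) i ^ γ i

/-- One-variable Krawtchouk polynomial `K_n(x; p, M)`. -/
noncomputable def kraw1 (n : ℕ) (x p M : ℝ) : ℝ :=
  ∑ k ∈ Finset.range (n + 1),
    poch (-(n : ℝ)) k * poch (-x) k / (poch (-M) k * (Nat.factorial k : ℝ) * p ^ k)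

/-- The extended parameter `𝛒 = (ρ_1, …, ρ_d, 1 - |ρ|)`. -/
noncomputable def brho (d : ℕ) (ρ : Fin d → ℝ) : Fin (d + 1) → ℝ :=
  Fin.snoc ρ (1 - ∑ i, ρ i)

/-- `𝛒^γ = ∏ i 𝛒_i^{γ i}`. -/
noncomputable def bpow (d : ℕ) (ρ : Fin d → ℝ) (γ : Fin (d + 1) → ℕ) : ℝ :=
  ∏ i, brho d ρ i ^ γ i

/-- `|𝛒_j| = ρ_1 + ⋯ + ρ_j` (1-based `j`). -/
noncomputable def sumLe (d : ℕ) (ρ : Fin d → ℝ) (j : Fin d) : ℝ :=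
  ∑ i ∈ Finset.univ.filter (fun i : Fin d => (i : ℕ) ≤ (j : ℕ)), ρ i

/-- `|𝛒_{j-1}| = ρ_1 + ⋯ + ρ_{j-1}` (1-based `j`). -/
noncomputable def sumLtρ (d : ℕ) (ρ : Fin d → ℝ) (j : Fin d) : ℝ :=
  ∑ i ∈ Finset.univ.filter (fun i : Fin d => (i : ℕ) < (j : ℕ)), ρ i

/-- Krawtchouk polynomial of `d` variables `K_ν(x; ρ, N)`. -/
noncomputable def krawH (d N : ℕ) (ρ : Fin d → ℝ) (ν : Fin d → ℕ)
    (x : Fin (d + 1) → ℕ) : ℝ :=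
  (-1 : ℝ) ^ (∑ i, ν i) / poch (-(N : ℝ)) (∑ i, ν i) *
    ∏ j : Fin d,
      ρ j ^ ν j / (1 - sumLe d ρ j) ^ ν j *
        poch (-(N : ℝ) + sumLt d x j + sumGt d ν j) (ν j) *
        kraw1 (ν j) (x j.castSucc : ℝ) (ρ j / (1 - sumLtρ d ρ j))
          ((N : ℝ) - sumLt d x j - sumGt d ν j)

/-- Squared norm `C_ν(ρ, N)` of the Krawtchouk polynomial `K_ν(·; ρ, N)`. -/
noncomputable def Cnorm (d N : ℕ) (ρ : Fin d → ℝ) (ν : Fin d → ℕ) : ℝ :=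
  (-1 : ℝ) ^ (∑ i, ν i) / (poch (-(N : ℝ)) (∑ i, ν i) * (Nat.factorial N : ℝ)) *
    ∏ j : Fin d,
      (Nat.factorial (ν j) : ℝ) * ρ j ^ ν j /
        (1 - sumLe d ρ j) ^ ((ν j : ℤ) - ((Fin.snoc ν 0 : Fin (d + 1) → ℕ) j.succ : ℤ))

/-- Monic Krawtchouk polynomial `L_α(x; ρ, N)`. -/
noncomputable def monicL (d N : ℕ) (ρ : Fin d → ℝ) (α : Fin (d + 1) → ℕ)
    (x : Fin (d + 1) → ℝ) : ℝ :=
  poch (-(N : ℝ)) (∑ i, α i) * bpow d ρ α *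
    ∑ γ ∈ below α,
      pochV (fun i => -(α i : ℝ)) γ * (-1 : ℝ) ^ (∑ i, γ i) /
          (mfact γ * poch (-(N : ℝ)) (∑ i, γ i) * bpow d ρ γ) *
        mono γ x

/-- Projection `L_{α,n}(x; ρ, N)` of `m_α/𝛒^α` onto the space of degree `n`. -/
noncomputable def monicLn (d N : ℕ) (ρ : Fin d → ℝ) (α : Fin (d + 1) → ℕ) (n : ℕ)
    (x : Fin (d + 1) → ℝ) : ℝ :=
  (-1 : ℝ) ^ (∑ i, α i) * poch (-(N : ℝ)) (∑ i, α i) / poch (-(N : ℝ)) n *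
    ∑ β ∈ ZN d n,
      pochV (fun i => -(α i : ℝ)) β / (mfact β * bpow d ρ β) * monicL d N ρ β x

/-- The kernel `F_k(x, y; ρ) = Σ_{|γ|=k} (-x)_γ (-y)_γ / (γ! 𝛒^γ)`. -/
noncomputable def Ffun (d : ℕ) (ρ : Fin d → ℝ) (x y : Fin (d + 1) → ℕ) (k : ℕ) : ℝ :=
  ∑ γ ∈ ZN d k,
    pochV (fun i => -(x i : ℝ)) γ * pochV (fun i => -(y i : ℝ)) γ / (mfact γ * bpow d ρ γ)

lemma poch_neg_nat (n k : ℕ) : poch (-(n:ℝ)) k = (-1)^k * (n.descFactorial k : ℝ) := by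
  induction k with
  | zero => simp [poch]
  | succ k ih =>
    rw [poch, ih, Nat.descFactorial_succ]
    rcases le_or_gt k n with h | h
    · rw [Nat.cast_mul, Nat.cast_sub h]
      ring
    · rw [Nat.descFactorial_eq_zero_iff_lt.mpr h]
      simp

lemma pochV_neg_nat {m : ℕ} (γ α : Fin m → ℕ) :
    pochV (fun i => -(γ i : ℝ)) α
      = (-1)^(∑ i, α i) * ∏ i, (Nat.descFactorial (γ i) (α i) : ℝ) := by
  unfold pochV
  simp_rw [poch_neg_nat]
  rw [Finset.prod_mul_distrib, Finset.prod_pow_eq_pow_sum]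

lemma mem_ZN_iff {d n : ℕ} (γ : Fin (d+1) → ℕ) : γ ∈ ZN d n ↔ ∑ i, γ i = n := by
  simp only [ZN, Finset.mem_filter, Fintype.mem_piFinset, Finset.mem_range, Nat.lt_succ_iff,
    and_iff_right_iff_imp]
  intro h i
  calc γ i ≤ ∑ j, γ j := Finset.single_le_sum (fun j _ => Nat.zero_le _) (Finset.mem_univ i)
    _ = n := h

lemma ZN_eq_piAntidiag (d n : ℕ) : ZN d n = Finset.piAntidiag Finset.univ n := by
  ext γ
  rw [mem_ZN_iff, Finset.mem_piAntidiag]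
  simp

lemma mfact_pos {m : ℕ} (γ : Fin m → ℕ) : 0 < mfact γ :=
  Finset.prod_pos fun i _ => by positivity

lemma multinomial_cast {m n : ℕ} (γ : Fin m → ℕ) (h : ∑ i, γ i = n) :
    (Nat.multinomial Finset.univ γ : ℝ) = (Nat.factorial n : ℝ) / mfact γ := by
  have := Nat.multinomial_spec Finset.univ γ
  rw [h] at this
  have h2 : mfact γ * (Nat.multinomial Finset.univ γ : ℝ) = (Nat.factorial n : ℝ) := by
    rw [mfact, ← Nat.cast_prod, ← Nat.cast_mul, this]
  field_simp [(mfact_pos γ).ne']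
  linarith [h2]

/-- `Σ_{|γ|=N} (N!/γ!) (-γ)_α y^γ = (-N)_{|α|} |y|^{N-|α|} y^α`. -/
theorem sum_monomial_pochhammer (d N : ℕ) (hd : 1 ≤ d) (y : Fin (d + 1) → ℝ)
    (α : Fin (d + 1) → ℕ) (hα : ∑ i, α i ≤ N) :
    ∑ γ ∈ ZN d N,
        (Nat.factorial N : ℝ) / mfact γ * pochV (fun i => -(γ i : ℝ)) α * ∏ i, y i ^ γ i =
      poch (-(N : ℝ)) (∑ i, α i) * (∑ i, y i) ^ (N - ∑ i, α i) * ∏ i, y i ^ α i := by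
  classical
  set A := ∑ i, α i with hA
  set M := N - A with hM
  have hb : (M.factorial : ℝ) * (N.descFactorial A : ℝ) = (N.factorial : ℝ) := by
    rw [← Nat.cast_mul, hM, Nat.factorial_mul_descFactorial hα]
  rw [poch_neg_nat]
  have hmul : ((∑ i, y i)) ^ M
      = ∑ δ ∈ ZN d M, (M.factorial : ℝ) / mfact δ * ∏ i, y i ^ δ i := by
    rw [ZN_eq_piAntidiag, Finset.sum_pow_eq_sum_piAntidiag]
    exact Finset.sum_congr rfl fun δ hδ => by
      rw [multinomial_cast δ (Finset.mem_piAntidiag.mp hδ).1]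
  rw [hmul, Finset.mul_sum, Finset.sum_mul]
  rw [← Finset.sum_filter_add_sum_filter_not (ZN d N) (fun γ => ∀ i, α i ≤ γ i)]
  have hz : (∑ γ ∈ (ZN d N).filter fun γ => ¬ ∀ i, α i ≤ γ i,
      (N.factorial : ℝ) / mfact γ * pochV (fun i => -(γ i : ℝ)) α * ∏ i, y i ^ γ i) = 0 := by
    refine Finset.sum_eq_zero fun γ hγ => ?_
    obtain ⟨-, h2⟩ := Finset.mem_filter.mp hγ
    push_neg at h2
    obtain ⟨i0, hi0⟩ := h2
    rw [pochV_neg_nat, Finset.prod_eq_zero (Finset.mem_univ i0)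
      (by rw [Nat.descFactorial_eq_zero_iff_lt.mpr hi0, Nat.cast_zero])]
    ring
  rw [hz, add_zero]
  refine Finset.sum_nbij' (i := fun γ i => γ i - α i) (j := fun δ i => α i + δ i)
    ?_ ?_ ?_ ?_ ?_
  · intro γ hγ
    obtain ⟨h1, h2⟩ := Finset.mem_filter.mp hγ
    rw [mem_ZN_iff] at h1 ⊢
    have hs : ∑ i, (γ i - α i + α i) = ∑ i, γ i :=
      Finset.sum_congr rfl fun i _ => Nat.sub_add_cancel (h2 i)
    rw [Finset.sum_add_distrib] at hs
    show ∑ i, (γ i - α i) = M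
    omega
  · intro δ hδ
    rw [mem_ZN_iff] at hδ
    rw [Finset.mem_filter, mem_ZN_iff, Finset.sum_add_distrib, hδ]
    exact ⟨by omega, fun i => Nat.le_add_right _ _⟩
  · intro γ hγ
    obtain ⟨-, h2⟩ := Finset.mem_filter.mp hγ
    funext i
    exact Nat.add_sub_cancel' (h2 i)
  · intro δ hδ
    funext i
    exact Nat.add_sub_cancel_left _ _
  · intro γ hγ
    obtain ⟨h1, h2⟩ := Finset.mem_filter.mp hγ
    rw [mem_ZN_iff] at h1
    have ha : mfact γ = mfact (fun i => γ i - α i)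
        * ∏ i, (Nat.descFactorial (γ i) (α i) : ℝ) := by
      unfold mfact
      rw [← Finset.prod_mul_distrib]
      refine Finset.prod_congr rfl fun i _ => ?_
      rw [← Nat.cast_mul, Nat.factorial_mul_descFactorial (h2 i)]
    have hc : (∏ i, y i ^ γ i)
        = (∏ i, y i ^ (γ i - α i)) * ∏ i, y i ^ α i := by
      rw [← Finset.prod_mul_distrib]
      refine Finset.prod_congr rfl fun i _ => ?_
      rw [← pow_add, Nat.sub_add_cancel (h2 i)]
    have hPne : (∏ i, (Nat.descFactorial (γ i) (α i) : ℝ)) ≠ 0 := by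
      refine Finset.prod_ne_zero_iff.mpr fun i _ => ?_
      have := h2 i
      simp only [ne_eq, Nat.cast_eq_zero, Nat.descFactorial_eq_zero_iff_lt]
      omega
    have hFne : mfact (fun i => γ i - α i) ≠ 0 := (mfact_pos _).ne'
    rw [pochV_neg_nat, ha, hc]
    field_simp
    linear_combination (-((-1:ℝ)^(∑ i, α i) *
      (∏ i, y i ^ (γ i - α i)) * (∏ i, y i ^ α i))) * hb
end

section
/- Let d ≥ 1, N ∈ ℕ, κ ∈ ℝ^{d+1} with each κ_i > −1, and set λ_κ = |κ|+d+1. For every x ∈ Z_N^{d+1} and every α ∈ ℕ^{d+1} with |α| ≤ N, the shifted monomial m_α expands in monic Hahn polynomials as m_α(x) = (−1)^{|α|} · Σ_{β ≤ α} ((−α)_β (−N)_{|α|} (κ+1)_α (λ_κ)_{2|β|} / (β! (−N)_{|β|} (κ+1)_β (λ_κ)_{|α|+|β|})) · Q_β(x; κ, N). -/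
open Finset

lemma poch_succ (a : ℝ) (k : ℕ) : poch a (k+1) = poch a k * (a + k) := rfl

lemma poch_eq_prod (a : ℝ) (k : ℕ) : poch a k = ∏ i ∈ Finset.range k, (a + i) := by
  induction k with
  | zero => simp [poch]
  | succ n ih => rw [poch, ih, Finset.prod_range_succ]

lemma poch_pos {a : ℝ} (ha : 0 < a) (k : ℕ) : 0 < poch a k := by
  rw [poch_eq_prod]; exact Finset.prod_pos fun i _ => by positivity

lemma poch_succ_left (a : ℝ) (k : ℕ) : poch a (k+1) = a * poch (a+1) k := by
  induction k with
  | zero => simp [poch]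
  | succ n ih =>
    rw [poch_succ, ih, poch_succ]
    push_cast; ring

lemma poch_add (a : ℝ) (s t : ℕ) : poch a (s + t) = poch a s * poch (a + s) t := by
  induction t with
  | zero => simp [poch]
  | succ n ih =>
    rw [show s + (n+1) = (s+n)+1 from rfl, poch_succ, ih, poch_succ]
    push_cast; ring

lemma poch_neg_nat_eq_zero {c g : ℕ} (h : c < g) : poch (-(c:ℝ)) g = 0 := by
  rw [poch_eq_prod]
  refine Finset.prod_eq_zero (Finset.mem_range.2 h) ?_
  simp

lemma poch_neg_nat_s5 {c g : ℕ} (h : g ≤ c) :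
    poch (-(c:ℝ)) g = (-1:ℝ)^g * (Nat.factorial c : ℝ) / (Nat.factorial (c-g) : ℝ) := by
  induction g with
  | zero =>
    have : (Nat.factorial c : ℝ) ≠ 0 := by exact_mod_cast Nat.factorial_ne_zero _
    simp [poch, this]
  | succ n ih =>
    have hn : n ≤ c := Nat.le_of_succ_le h
    have h1 : c - n = (c - (n+1)) + 1 := by omega
    have e3 : (c - n).factorial = (c - n) * (c - (n+1)).factorial := by
      rw [h1, Nat.factorial_succ]
    have e1 : (-(c:ℝ) + n) = -(((c-n:ℕ)):ℝ) := by
      push_cast [Nat.cast_sub hn]; ring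
    have e2 : (((c-n:ℕ)):ℝ) ≠ 0 := by
      have : 0 < c - n := by omega
      positivity
    have hne : (Nat.factorial (c - (n+1)) : ℝ) ≠ 0 := by
      exact_mod_cast Nat.factorial_ne_zero _
    rw [poch_succ, ih hn, e1]
    rw [show ((Nat.factorial (c-n)):ℝ) = (((c-n:ℕ)):ℝ) * (Nat.factorial (c - (n+1)) : ℝ) by
      exact_mod_cast congrArg (Nat.cast : ℕ → ℝ) e3]
    have e2' : ((c:ℝ) - n) ≠ 0 := by
      rw [← Nat.cast_sub hn]; exact e2
    rw [pow_succ]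
    field_simp

lemma poch_neg_nat_ne_zero {c g : ℕ} (h : g ≤ c) : poch (-(c:ℝ)) g ≠ 0 := by
  rw [poch_neg_nat_s5 h]
  have h1 : (Nat.factorial c : ℝ) ≠ 0 := by exact_mod_cast Nat.factorial_ne_zero _
  have h2 : (Nat.factorial (c-g) : ℝ) ≠ 0 := by exact_mod_cast Nat.factorial_ne_zero _
  have h3 : (-1:ℝ)^g ≠ 0 := by positivity
  positivity

lemma poch_ne_zero_of_pos {a : ℝ} (ha : 0 < a) (k : ℕ) : poch a k ≠ 0 :=
  ne_of_gt (poch_pos ha k)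

lemma poch_diff {y : ℝ} (hy : 0 < y) (r : ℕ) :
    1 / poch y r - 1 / poch (y+1) r = (r:ℝ) / poch y (r+1) := by
  have h1 : poch y (r+1) = poch y r * (y + r) := rfl
  have h2 : poch y (r+1) = y * poch (y+1) r := poch_succ_left y r
  have n1 : poch y r ≠ 0 := poch_ne_zero_of_pos hy r
  have n2 : poch (y+1) r ≠ 0 := poch_ne_zero_of_pos (by linarith) r
  have n3 : (y + r : ℝ) ≠ 0 := by positivity
  have n4 : y ≠ 0 := ne_of_gt hy
  have h3 : y * poch (y+1) r = poch y r * (y + r) := h2.symm.trans h1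
  have hQ : poch (y+1) r = poch y r * (y + (r:ℝ)) / y := by
    rw [eq_div_iff n4]; linarith [h3]
  rw [h1, hQ]
  field_simp
  ring

lemma lemA (m : ℕ) : ∀ (M : ℕ) (y : ℝ), 0 < y →
    ∑ j ∈ Finset.range (M+1), (-1:ℝ)^j * (Nat.choose M j : ℝ) / poch (y+j) m
      = poch (m:ℝ) M / poch y (m+M) := by
  intro M
  induction M with
  | zero => intro y hy; simp [poch]
  | succ M ih =>
    intro y hy
    have hy1 : (0:ℝ) < y + 1 := by linarith
    have split : ∑ j ∈ Finset.range (M+2), (-1:ℝ)^j * ((M+1).choose j : ℝ) / poch (y+j) m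
        = (∑ j ∈ Finset.range (M+1), (-1:ℝ)^j * (M.choose j : ℝ) / poch (y+j) m)
          - ∑ j ∈ Finset.range (M+1), (-1:ℝ)^j * (M.choose j : ℝ) / poch ((y+1)+j) m := by
      rw [Finset.sum_range_succ' (fun j => (-1:ℝ)^j * ((M+1).choose j : ℝ) / poch (y+j) m) (M+1)]
      have e1 : ∀ j, (-1:ℝ)^(j+1) * ((M+1).choose (j+1) : ℝ) / poch (y+(j+1:ℕ)) m
          = (-1:ℝ)^(j+1) * (M.choose j : ℝ) / poch ((y+1)+j) m
            + (-1:ℝ)^(j+1) * (M.choose (j+1) : ℝ) / poch (y+(j+1:ℕ)) m := by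
        intro j
        rw [Nat.choose_succ_succ]
        have : ((y+1)+(j:ℝ)) = y + ((j+1:ℕ):ℝ) := by push_cast; ring
        rw [this]
        push_cast
        ring
      rw [Finset.sum_congr rfl (fun j _ => e1 j), Finset.sum_add_distrib]
      have e2 : ∑ j ∈ Finset.range (M+1),
          (-1:ℝ)^(j+1) * (M.choose j : ℝ) / poch ((y+1)+j) m
          = - ∑ j ∈ Finset.range (M+1), (-1:ℝ)^j * (M.choose j : ℝ) / poch ((y+1)+j) m := by
        rw [← Finset.sum_neg_distrib]
        refine Finset.sum_congr rfl fun j _ => ?_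
        rw [pow_succ]
        ring
      have e3 : (∑ j ∈ Finset.range (M+1),
            (-1:ℝ)^(j+1) * (M.choose (j+1) : ℝ) / poch (y+(j+1:ℕ)) m)
            + (-1:ℝ)^0 * ((M+1).choose 0 : ℝ) / poch (y+(0:ℕ)) m
          = ∑ j ∈ Finset.range (M+1), (-1:ℝ)^j * (M.choose j : ℝ) / poch (y+j) m := by
        have e4 : ∑ j ∈ Finset.range (M+1),
            (-1:ℝ)^(j+1) * (M.choose (j+1) : ℝ) / poch (y+(j+1:ℕ)) m
            = ∑ j ∈ Finset.range M,
            (-1:ℝ)^(j+1) * (M.choose (j+1) : ℝ) / poch (y+(j+1:ℕ)) m := by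
          rw [Finset.sum_range_succ]
          simp [Nat.choose_succ_self]
        rw [e4, Finset.sum_range_succ' (fun j => (-1:ℝ)^j * (M.choose j : ℝ) / poch (y+j) m) M]
        simp
      linarith [e2, e3]
    rw [split, ih y hy, ih (y+1) hy1]
    have := poch_diff hy (m+M)
    have key : poch (m:ℝ) M / poch y (m+M) - poch (m:ℝ) M / poch (y+1) (m+M)
        = poch (m:ℝ) M * (((m+M:ℕ):ℝ) / poch y (m+M+1)) := by
      rw [← this]
      ring
    rw [key]
    have e5 : poch (m:ℝ) (M+1) = poch (m:ℝ) M * ((m:ℝ) + M) := rfl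
    have e6 : m + (M+1) = (m+M)+1 := rfl
    rw [e6, e5]
    push_cast
    ring

noncomputable def eterm (b : ℝ) (M : ℕ) : ℕ → ℝ
  | 0 => 1 / poch (b+1) M
  | (j+1) => (b + 2*((j:ℝ)+1)) / poch (b + ((j:ℝ)+1)) (M+1)

lemma eterm_decomp {b : ℝ} (hb : -1 < b) (M : ℕ) (j : ℕ) :
    eterm b M j = 1 / poch (b+1+(j:ℝ)) M + (j:ℝ) / poch (b+(j:ℝ)) (M+1) := by
  cases j with
  | zero => simp [eterm]
  | succ j =>
    have hpos : (0:ℝ) < b + ((j:ℝ)+1) := by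
      have : (0:ℝ) ≤ (j:ℝ) := Nat.cast_nonneg j
      linarith
    have h2 : poch (b + ((j:ℝ)+1)) (M+1) = (b + ((j:ℝ)+1)) * poch (b + ((j:ℝ)+1) + 1) M :=
      poch_succ_left _ M
    have n1 : poch (b + ((j:ℝ)+1)) (M+1) ≠ 0 := poch_ne_zero_of_pos hpos _
    have n2 : poch (b + ((j:ℝ)+1) + 1) M ≠ 0 := poch_ne_zero_of_pos (by linarith) _
    have n3 : (b + ((j:ℝ)+1)) ≠ 0 := ne_of_gt hpos
    show (b + 2*((j:ℝ)+1)) / poch (b + ((j:ℝ)+1)) (M+1)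
      = 1 / poch (b+1+((j+1:ℕ):ℝ)) M + ((j+1:ℕ):ℝ) / poch (b+((j+1:ℕ):ℝ)) (M+1)
    have e1 : b+1+((j+1:ℕ):ℝ) = b + ((j:ℝ)+1) + 1 := by push_cast; ring
    have e2 : b+((j+1:ℕ):ℝ) = b + ((j:ℝ)+1) := by push_cast; ring
    rw [e1, e2, h2]
    field_simp
    push_cast; ring

lemma star {b : ℝ} (hb : -1 < b) {M : ℕ} (hM : 1 ≤ M) :
    ∑ j ∈ Finset.range (M+1), (-1:ℝ)^j * (Nat.choose M j : ℝ) * eterm b M j = 0 := by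
  have hb1 : (0:ℝ) < b + 1 := by linarith
  have hsplit : ∑ j ∈ Finset.range (M+1), (-1:ℝ)^j * (Nat.choose M j : ℝ) * eterm b M j
      = (∑ j ∈ Finset.range (M+1), (-1:ℝ)^j * (Nat.choose M j : ℝ) / poch ((b+1)+j) M)
        + ∑ j ∈ Finset.range (M+1),
            (-1:ℝ)^j * (Nat.choose M j : ℝ) * ((j:ℝ) / poch (b+(j:ℝ)) (M+1)) := by
    rw [← Finset.sum_add_distrib]
    refine Finset.sum_congr rfl fun j _ => ?_
    rw [eterm_decomp hb M j]
    ring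
  rw [hsplit]
  have first : ∑ j ∈ Finset.range (M+1), (-1:ℝ)^j * (Nat.choose M j : ℝ) / poch ((b+1)+j) M
      = poch (M:ℝ) M / poch (b+1) (M+M) := lemA M M (b+1) hb1
  have second : ∑ j ∈ Finset.range (M+1),
      (-1:ℝ)^j * (Nat.choose M j : ℝ) * ((j:ℝ) / poch (b+(j:ℝ)) (M+1))
      = - (M:ℝ) * (poch ((M:ℝ)+1) (M-1) / poch (b+1) ((M+1)+(M-1))) := by
    rw [Finset.sum_range_succ' (fun j => (-1:ℝ)^j * (Nat.choose M j : ℝ)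
        * ((j:ℝ) / poch (b+(j:ℝ)) (M+1))) M]
    have e0 : (-1:ℝ)^0 * (Nat.choose M 0 : ℝ) * (((0:ℕ):ℝ) / poch (b+((0:ℕ):ℝ)) (M+1)) = 0 := by
      simp
    rw [e0, add_zero]
    have ej : ∀ j, (-1:ℝ)^(j+1) * (Nat.choose M (j+1) : ℝ)
        * (((j+1:ℕ):ℝ) / poch (b+((j+1:ℕ):ℝ)) (M+1))
        = -(M:ℝ) * ((-1:ℝ)^j * (Nat.choose (M-1) j : ℝ) / poch ((b+1)+(j:ℝ)) (M+1)) := by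
      intro j
      have hch : (M:ℝ) * (Nat.choose (M-1) j : ℝ) = (Nat.choose M (j+1) : ℝ) * ((j:ℝ)+1) := by
        have h0 := Nat.add_one_mul_choose_eq (M-1) j
        rw [show M - 1 + 1 = M from by omega] at h0
        exact_mod_cast congrArg (Nat.cast : ℕ → ℝ) h0
      have e2 : b+((j+1:ℕ):ℝ) = (b+1) + (j:ℝ) := by push_cast; ring
      rw [e2, pow_succ]
      push_cast
      linear_combination ((-1:ℝ)^j / poch ((b+1)+(j:ℝ)) (M+1)) * hch
    rw [Finset.sum_congr rfl (fun j _ => ej j)]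
    rw [← Finset.mul_sum]
    have hfin : ∑ j ∈ Finset.range M,
        (-1:ℝ)^j * (Nat.choose (M-1) j : ℝ) / poch ((b+1)+(j:ℝ)) (M+1)
        = poch (((M+1:ℕ)):ℝ) (M-1) / poch (b+1) ((M+1)+(M-1)) := by
      have h := lemA (M+1) (M-1) (b+1) hb1
      rw [show (M-1)+1 = M from by omega] at h
      exact h
    rw [hfin]
    push_cast
    ring
  rw [first, second]
  have e7 : (M+1)+(M-1) = M+M := by omega
  rw [e7]
  have e8 : poch (M:ℝ) M = (M:ℝ) * poch ((M:ℝ)+1) (M-1) := by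
    have := poch_succ_left (M:ℝ) (M-1)
    rw [show (M-1)+1 = M from by omega] at this
    exact this
  rw [e8]
  ring

lemma poch_base_pos_ne {a : ℝ} (ha : 0 < a) (k : ℕ) : poch a k ≠ 0 :=
  ne_of_gt (poch_pos ha k)

lemma P_eq {a : ℝ} (ha : -1 < a) (k M j : ℕ) :
    poch (a+1) (2*(k+j)) * poch (a + ((k+j:ℕ):ℝ)) k
      / (poch (a+1) ((k+M) + (k+j)) * poch (a + ((k+j:ℕ):ℝ)) (k+j))
    = eterm (a + 2*(k:ℝ)) M j := by
  have ha1 : (0:ℝ) < a + 1 := by linarith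
  cases j with
  | zero =>
    have hsp : poch (a+1) ((k+M) + (k+0)) = poch (a+1) (2*k) * poch (a+1+((2*k:ℕ):ℝ)) M := by
      rw [show (k+M)+(k+0) = 2*k + M from by omega]
      exact poch_add _ _ _
    have hb : a+1+((2*k:ℕ):ℝ) = (a + 2*(k:ℝ)) + 1 := by push_cast; ring
    have hnz1 : poch (a+1) (2*k) ≠ 0 := poch_base_pos_ne ha1 _
    have hnz2 : poch (a + ((k+0:ℕ):ℝ)) (k+0) ≠ 0 := by
      rcases Nat.eq_zero_or_pos k with h | h
      · subst h; simp [poch]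
      · refine poch_base_pos_ne ?_ _
        have : (1:ℝ) ≤ ((k+0:ℕ):ℝ) := by exact_mod_cast h
        linarith
    have hnz3 : poch ((a + 2*(k:ℝ)) + 1) M ≠ 0 := by
      refine poch_base_pos_ne ?_ _
      have : (0:ℝ) ≤ (k:ℝ) := Nat.cast_nonneg k
      linarith
    rw [hsp, hb]
    show _ = 1 / poch ((a + 2*(k:ℝ))+1) M
    rw [show (2*(k+0)) = 2*k from by omega]
    rw [div_eq_div_iff (by exact mul_ne_zero (mul_ne_zero hnz1 hnz3) hnz2) hnz3]
    ring
  | succ j' =>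
    set n := k + (j'+1) with hn
    have hn1 : 1 ≤ n := by omega
    have hnr : (1:ℝ) ≤ (n:ℝ) := by exact_mod_cast hn1
    have hkr : (0:ℝ) ≤ (k:ℝ) := Nat.cast_nonneg k
    have hjr : (0:ℝ) ≤ (j':ℝ) := Nat.cast_nonneg j'
    have h2n : 2*n = ((n-1)+n)+1 := by omega
    have h1 : poch (a+1) (2*n) = poch (a+1) ((n-1)+n) * (a+1+((n-1)+n : ℕ)) := by
      rw [h2n]; rfl
    have h2 : poch (a+1) ((n-1)+n) = poch (a+1) (n-1) * poch (a+1+((n-1:ℕ):ℝ)) n :=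
      poch_add _ _ _
    have h3 : poch (a+1) ((k+M)+n) = poch (a+1) ((n-1)+k) * poch (a+1+(((n-1)+k:ℕ):ℝ)) (M+1) := by
      rw [show (k+M)+n = ((n-1)+k) + (M+1) from by omega]
      exact poch_add _ _ _
    have h4 : poch (a+1) ((n-1)+k) = poch (a+1) (n-1) * poch (a+1+((n-1:ℕ):ℝ)) k :=
      poch_add _ _ _
    have ec1 : a+1+((n-1:ℕ):ℝ) = a + (n:ℝ) := by
      have : ((n-1:ℕ):ℝ) = (n:ℝ) - 1 := by
        rw [Nat.cast_sub hn1]; norm_num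
      rw [this]; ring
    have ec2 : a+1+(((n-1)+k:ℕ):ℝ) = (a + 2*(k:ℝ)) + ((j':ℝ)+1) := by
      have : (((n-1)+k:ℕ):ℝ) = (n:ℝ) - 1 + k := by
        push_cast [Nat.cast_sub hn1]; ring
      rw [this, hn]; push_cast; ring
    have ec3 : a+1+(((n-1)+n : ℕ):ℝ) = (a + 2*(k:ℝ)) + 2*((j':ℝ)+1) := by
      have : (((n-1)+n:ℕ):ℝ) = (n:ℝ) - 1 + n := by
        push_cast [Nat.cast_sub hn1]; ring
      rw [this, hn]; push_cast; ring
    have hposn : (0:ℝ) < a + (n:ℝ) := by linarith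
    have nz1 : poch (a+1) (n-1) ≠ 0 := poch_base_pos_ne ha1 _
    have nz2 : poch (a+(n:ℝ)) n ≠ 0 := poch_base_pos_ne hposn _
    have nz3 : poch (a+(n:ℝ)) k ≠ 0 := poch_base_pos_ne hposn _
    have nz4 : poch ((a + 2*(k:ℝ)) + ((j':ℝ)+1)) (M+1) ≠ 0 := by
      refine poch_base_pos_ne ?_ _
      linarith
    show poch (a+1) (2*n) * poch (a + (n:ℝ)) k
        / (poch (a+1) ((k+M) + n) * poch (a + (n:ℝ)) n)
      = (a + 2*(k:ℝ) + 2*((j':ℝ)+1)) / poch ((a + 2*(k:ℝ)) + ((j':ℝ)+1)) (M+1)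
    rw [h1, h2, h3, h4, ec1, ec2, ec3]
    rw [div_eq_div_iff (by exact mul_ne_zero (mul_ne_zero (mul_ne_zero nz1 nz3) nz4) nz2) nz4]
    ring

lemma mem_below {m : ℕ} {α δ : Fin m → ℕ} : δ ∈ below α ↔ ∀ i, δ i ≤ α i := by
  simp [below, Fintype.mem_piFinset, Nat.lt_succ_iff]

lemma mVdm (m : ℕ) (μ : Fin m → ℕ) (j : ℕ) :
    ∑ δ ∈ (below μ).filter (fun δ => ∑ i, δ i = j), ∏ i, (μ i).choose (δ i)
      = (∑ i, μ i).choose j := by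
  classical
  have expand : ∀ n : ℕ, ((Polynomial.X + 1 : Polynomial ℕ))^n
      = ∑ t ∈ Finset.range (n+1), Polynomial.X^t * ((n.choose t : ℕ) : Polynomial ℕ) := by
    intro n
    rw [add_pow]
    simp
  have hP : (∑ δ ∈ below μ,
        Polynomial.X ^ (∑ i, δ i) * ((∏ i, (μ i).choose (δ i) : ℕ) : Polynomial ℕ))
      = ((Polynomial.X + 1 : Polynomial ℕ))^(∑ i, μ i) := by
    rw [← Finset.prod_pow_eq_pow_sum]
    rw [Finset.prod_congr rfl (fun i _ => expand (μ i))]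
    rw [Finset.prod_univ_sum]
    refine Finset.sum_congr rfl fun δ _ => ?_
    rw [Finset.prod_mul_distrib, Finset.prod_pow_eq_pow_sum, Nat.cast_prod]
  have hc := congrArg (fun p => Polynomial.coeff p j) hP
  simp only [Polynomial.finset_sum_coeff] at hc
  rw [Polynomial.coeff_X_add_one_pow] at hc
  have hterm : ∀ δ : Fin m → ℕ,
      Polynomial.coeff (Polynomial.X ^ (∑ i, δ i)
        * ((∏ i, (μ i).choose (δ i) : ℕ) : Polynomial ℕ)) j
      = if ∑ i, δ i = j then ∏ i, (μ i).choose (δ i) else 0 := by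
    intro δ
    rw [mul_comm, ← Polynomial.C_eq_natCast, Polynomial.coeff_C_mul, Polynomial.coeff_X_pow]
    rcases eq_or_ne (∑ i, δ i) j with h | h
    · simp [h]
    · simp [h, Ne.symm h]
  rw [Finset.sum_congr rfl (fun δ _ => hterm δ)] at hc
  rw [← Finset.sum_filter] at hc
  exact hc

lemma group_sum (m : ℕ) (μ : Fin m → ℕ) (g : ℕ → ℝ) :
    ∑ δ ∈ below μ, (∏ i, ((μ i).choose (δ i) : ℝ)) * g (∑ i, δ i)
      = ∑ j ∈ Finset.range ((∑ i, μ i)+1), ((∑ i, μ i).choose j : ℝ) * g j := by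
  classical
  have maps : ∀ δ ∈ below μ, (∑ i, δ i) ∈ Finset.range ((∑ i, μ i)+1) := by
    intro δ hδ
    rw [Finset.mem_range, Nat.lt_succ_iff]
    exact Finset.sum_le_sum fun i _ => (mem_below.1 hδ) i
  rw [← Finset.sum_fiberwise_of_maps_to maps
    (fun δ => (∏ i, ((μ i).choose (δ i) : ℝ)) * g (∑ i, δ i))]
  refine Finset.sum_congr rfl fun j _ => ?_
  have : ∀ δ ∈ (below μ).filter (fun δ => ∑ i, δ i = j),
      (∏ i, ((μ i).choose (δ i) : ℝ)) * g (∑ i, δ i)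
      = (∏ i, ((μ i).choose (δ i) : ℝ)) * g j := by
    intro δ hδ
    rw [(Finset.mem_filter.1 hδ).2]
  rw [Finset.sum_congr rfl this, ← Finset.sum_mul]
  congr 1
  rw [← mVdm m μ j]
  push_cast
  rfl

lemma mfact_ne {m : ℕ} (γ : Fin m → ℕ) : mfact γ ≠ 0 := ne_of_gt (mfact_pos γ)

lemma pochV_pos {m : ℕ} {x : Fin m → ℝ} (h : ∀ i, 0 < x i) (γ : Fin m → ℕ) :
    0 < pochV x γ :=
  Finset.prod_pos fun i _ => poch_pos (h i) (γ i)

lemma pochV_neg_zero {m : ℕ} {c g : Fin m → ℕ} (h : ∃ i, c i < g i) :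
    pochV (fun i => -(c i : ℝ)) g = 0 := by
  obtain ⟨i, hi⟩ := h
  exact Finset.prod_eq_zero (Finset.mem_univ i) (poch_neg_nat_eq_zero hi)

lemma pochV_neg_eq {m : ℕ} {c g : Fin m → ℕ} (h : ∀ i, g i ≤ c i) :
    pochV (fun i => -(c i : ℝ)) g
      = (-1:ℝ)^(∑ i, g i) * mfact c / mfact (fun i => c i - g i) := by
  unfold pochV mfact
  rw [Finset.prod_congr rfl (fun i _ => poch_neg_nat_s5 (h i))]
  simp only [div_eq_mul_inv]
  rw [Finset.prod_mul_distrib, Finset.prod_mul_distrib, ← Finset.prod_inv_distrib,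
    Finset.prod_pow_eq_pow_sum]

lemma mfact_choose {m : ℕ} {μ δ : Fin m → ℕ} (h : ∀ i, δ i ≤ μ i) :
    mfact μ = (∏ i, ((μ i).choose (δ i) : ℝ)) * mfact δ * mfact (fun i => μ i - δ i) := by
  unfold mfact
  rw [← Finset.prod_mul_distrib, ← Finset.prod_mul_distrib]
  refine Finset.prod_congr rfl fun i _ => ?_
  have := Nat.choose_mul_factorial_mul_factorial (h i)
  exact_mod_cast (congrArg (Nat.cast : ℕ → ℝ) this).symm

noncomputable def Fco (d N : ℕ) (κ : Fin (d+1) → ℝ) (α β γ : Fin (d+1) → ℕ) : ℝ :=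
  (-1:ℝ)^(∑ i, α i) *
  (pochV (fun i => -(α i : ℝ)) β * poch (-(N : ℝ)) (∑ i, α i) *
      pochV (fun i => κ i + 1) α * poch ((∑ i, κ i) + d + 1) (2 * ∑ i, β i) /
      (mfact β * poch (-(N : ℝ)) (∑ i, β i) * pochV (fun i => κ i + 1) β *
        poch ((∑ i, κ i) + d + 1) ((∑ i, α i) + ∑ i, β i))) *
  (poch (-(N : ℝ)) (∑ i, β i) * pochV (fun i => κ i + 1) β /
      poch ((∑ i, κ i) + d + (∑ i, β i)) (∑ i, β i)) *
  (pochV (fun i => -(β i : ℝ)) γ * poch ((∑ i, κ i) + d + (∑ i, β i)) (∑ i, γ i) *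
      (-1:ℝ)^(∑ i, γ i) /
      (mfact γ * pochV (fun i => κ i + 1) γ * poch (-(N : ℝ)) (∑ i, γ i)))

lemma poch_shift_ne {a : ℝ} (ha : -1 < a) {n k : ℕ} (hk : k ≤ n) :
    poch (a + (n:ℝ)) k ≠ 0 := by
  cases k with
  | zero => simp [poch]
  | succ t =>
    refine poch_base_pos_ne ?_ _
    have h1 : (1:ℕ) ≤ n := by omega
    have : (1:ℝ) ≤ (n:ℝ) := by exact_mod_cast h1
    linarith

lemma sumk_neg_one (d : ℕ) (κ : Fin (d+1) → ℝ) (hκ : ∀ i, -1 < κ i) :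
    (-1:ℝ) < (∑ i, κ i) + d := by
  have h1 : ∑ _i : Fin (d+1), (-1:ℝ) < ∑ i, κ i :=
    Finset.sum_lt_sum_of_nonempty Finset.univ_nonempty fun i _ => hκ i
  have h2 : ∑ _i : Fin (d+1), (-1:ℝ) = -((d:ℝ)+1) := by
    simp [Finset.sum_const, Finset.card_univ]
  rw [h2] at h1
  linarith

set_option maxHeartbeats 2000000 in
lemma key (d N : ℕ) (κ : Fin (d+1) → ℝ) (hκ : ∀ i, -1 < κ i)
    (α : Fin (d+1) → ℕ) (hα : ∑ i, α i ≤ N)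
    (γ : Fin (d+1) → ℕ) (hγ : ∀ i, γ i ≤ α i) :
    ∑ β ∈ below α, Fco d N κ α β γ = if γ = α then 1 else 0 := by
  classical
  have ha : (-1:ℝ) < (∑ i, κ i) + d := sumk_neg_one d κ hκ
  have hκ1 : ∀ i, (0:ℝ) < κ i + 1 := fun i => by linarith [hκ i]
  by_cases hga : γ = α
  · subst hga
    rw [if_pos rfl]
    rw [Finset.sum_eq_single_of_mem γ (mem_below.2 fun i => le_refl _)]
    · -- Fco d N κ γ γ γ = 1
      unfold Fco
      have hPN : poch (-(N:ℝ)) (∑ i, γ i) ≠ 0 := poch_neg_nat_ne_zero hα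
      have hPκ : pochV (fun i => κ i + 1) γ ≠ 0 := ne_of_gt (pochV_pos hκ1 γ)
      have hpam : poch ((∑ i, κ i) + d + (↑(∑ i, γ i) : ℝ)) (∑ i, γ i) ≠ 0 :=
        poch_shift_ne ha (le_refl _)
      have hL1 : poch ((∑ i, κ i) + d + 1) (2 * ∑ i, γ i) ≠ 0 :=
        poch_base_pos_ne (by linarith) _
      have hL2 : poch ((∑ i, κ i) + d + 1) (∑ i, γ i + ∑ i, γ i) ≠ 0 :=
        poch_base_pos_ne (by linarith) _
      have hmf : mfact γ ≠ 0 := mfact_ne γ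
      have h2m : 2 * ∑ i, γ i = ∑ i, γ i + ∑ i, γ i := two_mul _
      have hVneg : pochV (fun i => -(γ i:ℝ)) γ
          = (-1:ℝ)^(∑ i, γ i) * mfact γ / mfact (fun i => γ i - γ i) :=
        pochV_neg_eq (fun i => le_refl _)
      have h0 : mfact (fun i : Fin (d+1) => γ i - γ i) = 1 := by simp [mfact]
      rw [h2m, hVneg, h0]
      have hsq : ((-1:ℝ)^(∑ i, γ i)) * ((-1:ℝ)^(∑ i, γ i)) = 1 := by
        rw [← pow_add, ← two_mul, pow_mul]
        norm_num
      set s1 := (-1:ℝ)^(∑ i, γ i) with hs1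
      set A := pochV (fun i => κ i + 1) γ with hA
      set B := poch (-(N:ℝ)) (∑ i, γ i) with hB
      set Cq := poch ((∑ i, κ i) + d + 1) (∑ i, γ i + ∑ i, γ i) with hC
      set Dq := poch ((∑ i, κ i) + d + (↑(∑ i, γ i):ℝ)) (∑ i, γ i) with hD
      set E := mfact γ with hE
      have h4 : s1 * s1 * (s1 * s1) = 1 := by rw [hsq]; ring
      field_simp
      linear_combination h4
    · intro β hβ hne
      have hble : ∀ i, β i ≤ γ i := mem_below.1 hβ
      have hex : ∃ i, β i < γ i := by
        by_contra hc
        push_neg at hc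
        exact hne (funext fun i => le_antisymm (hble i) (hc i))
      unfold Fco
      rw [pochV_neg_zero hex]
      simp
  · rw [if_neg hga]
    set μ : Fin (d+1) → ℕ := fun i => α i - γ i with hμ
    have hmk : ∑ i, α i = (∑ i, γ i) + (∑ i, μ i) := by
      rw [← Finset.sum_add_distrib]
      exact Finset.sum_congr rfl fun i _ => by
        have := hγ i
        show α i = γ i + (α i - γ i)
        omega
    have hM1 : 1 ≤ ∑ i, μ i := by
      obtain ⟨i, hi⟩ : ∃ i, γ i < α i := by
        by_contra hc; push_neg at hc
        exact hga (funext fun i => le_antisymm (hγ i) (hc i))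
      calc 1 ≤ μ i := by show 1 ≤ α i - γ i; omega
        _ ≤ ∑ i, μ i := Finset.single_le_sum (fun j _ => Nat.zero_le _) (Finset.mem_univ i)
    have hfilter : ∑ β ∈ (below α).filter (fun β => ∀ i, γ i ≤ β i), Fco d N κ α β γ
        = ∑ β ∈ below α, Fco d N κ α β γ := by
      refine Finset.sum_filter_of_ne ?_
      intro β hβ hne i
      by_contra hlt
      apply hne
      unfold Fco
      have hz : ∃ t, β t < γ t := ⟨i, by omega⟩
      rw [pochV_neg_zero (c := β) (g := γ) hz]
      simp
    rw [← hfilter]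
    have hbij : ∑ β ∈ (below α).filter (fun β => ∀ i, γ i ≤ β i), Fco d N κ α β γ
        = ∑ δ ∈ below μ, Fco d N κ α (fun t => γ t + δ t) γ := by
      refine Finset.sum_nbij' (fun β => fun t => β t - γ t) (fun δ => fun t => γ t + δ t)
        ?_ ?_ ?_ ?_ ?_
      · intro β hβ
        obtain ⟨h1, h2⟩ := Finset.mem_filter.1 hβ
        have h3 := mem_below.1 h1
        exact mem_below.2 fun i => by
          have h4 := h2 i
          have h5 := h3 i
          show β i - γ i ≤ α i - γ i
          omega
      · intro δ hδ
        have h2 := mem_below.1 hδ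
        refine Finset.mem_filter.2 ⟨mem_below.2 fun i => ?_, fun i => Nat.le_add_right _ _⟩
        have h5 : δ i ≤ α i - γ i := h2 i
        have := hγ i
        show γ i + δ i ≤ α i
        omega
      · intro β hβ
        obtain ⟨h1, h2⟩ := Finset.mem_filter.1 hβ
        funext t
        have := h2 t
        show γ t + (β t - γ t) = β t
        omega
      · intro δ hδ
        funext t
        show γ t + δ t - γ t = δ t
        omega
      · intro β hβ
        obtain ⟨h1, h2⟩ := Finset.mem_filter.1 hβ
        have he : (fun t => γ t + (β t - γ t)) = β := funext fun t => by have := h2 t; omega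
        rw [he]
    rw [hbij]
    have hbgt : (-1:ℝ) < (∑ i, κ i) + ↑d + 2*((∑ i, γ i : ℕ):ℝ) := by
      have : (0:ℝ) ≤ ((∑ i, γ i : ℕ):ℝ) := Nat.cast_nonneg _
      linarith
    have hterm : ∀ δ ∈ below μ, Fco d N κ α (fun t => γ t + δ t) γ
        = ((-1:ℝ)^(∑ i, μ i) * mfact α * poch (-(N:ℝ)) ((∑ i, γ i) + (∑ i, μ i)) *
            pochV (fun i => κ i + 1) α /
            (mfact μ * mfact γ * pochV (fun i => κ i + 1) γ * poch (-(N:ℝ)) (∑ i, γ i))) *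
          ((∏ i, ((μ i).choose (δ i) : ℝ)) *
            ((-1:ℝ)^(∑ i, δ i) *
              eterm ((∑ i, κ i) + ↑d + 2*((∑ i, γ i : ℕ):ℝ)) (∑ i, μ i) (∑ i, δ i))) := by
      intro δ hδ
      have hδμ : ∀ i, δ i ≤ μ i := mem_below.1 hδ
      have hβα : ∀ i, γ i + δ i ≤ α i := fun i => by
        have h1 : δ i ≤ α i - γ i := hδμ i
        have := hγ i
        omega
      have hs : ∑ i, (γ i + δ i) = (∑ i, γ i) + (∑ i, δ i) := Finset.sum_add_distrib
      have hjM : ∑ i, δ i ≤ ∑ i, μ i := Finset.sum_le_sum fun i _ => hδμ i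
      have E1 : pochV (fun i => -((α i : ℕ):ℝ)) (fun t => γ t + δ t)
          = (-1:ℝ)^((∑ i, γ i) + (∑ i, δ i)) * mfact α / mfact (fun i => μ i - δ i) := by
        rw [pochV_neg_eq hβα, hs]
        have he : (fun i => α i - (γ i + δ i)) = (fun i => μ i - δ i) := funext fun i => by
          show α i - (γ i + δ i) = (α i - γ i) - δ i
          omega
        rw [he]
      have E2 : pochV (fun i => -(((γ i + δ i : ℕ)):ℝ)) γ
          = (-1:ℝ)^(∑ i, γ i) * mfact (fun t => γ t + δ t) / mfact δ := by
        rw [pochV_neg_eq (c := fun t => γ t + δ t) (g := γ) (fun i => Nat.le_add_right _ _)]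
        have he : (fun i => (γ i + δ i) - γ i) = δ := funext fun i => by omega
        rw [he]
      have hPeq := P_eq (a := (∑ i, κ i) + (d:ℝ)) ha (∑ i, γ i) (∑ i, μ i) (∑ i, δ i)
      have hPNn : poch (-(N:ℝ)) ((∑ i, γ i) + (∑ i, δ i)) ≠ 0 :=
        poch_neg_nat_ne_zero (by omega)
      have hPNk : poch (-(N:ℝ)) (∑ i, γ i) ≠ 0 := poch_neg_nat_ne_zero (by omega)
      have hPNm : poch (-(N:ℝ)) ((∑ i, γ i) + (∑ i, μ i)) ≠ 0 := poch_neg_nat_ne_zero (by omega)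
      have hPκβ : pochV (fun i => κ i + 1) (fun t => γ t + δ t) ≠ 0 :=
        ne_of_gt (pochV_pos hκ1 _)
      have hPκγ : pochV (fun i => κ i + 1) γ ≠ 0 := ne_of_gt (pochV_pos hκ1 _)
      have hPκA : pochV (fun i => κ i + 1) α ≠ 0 := ne_of_gt (pochV_pos hκ1 _)
      have hFβ : mfact (fun t => γ t + δ t) ≠ 0 := mfact_ne _
      have hFγ : mfact γ ≠ 0 := mfact_ne _
      have hFδ : mfact δ ≠ 0 := mfact_ne _
      have hFμ : mfact μ ≠ 0 := mfact_ne _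
      have hFμδ : mfact (fun i => μ i - δ i) ≠ 0 := mfact_ne _
      have hCC : (∏ i, ((μ i).choose (δ i) : ℝ))
          = mfact μ / (mfact δ * mfact (fun i => μ i - δ i)) := by
        rw [eq_div_iff (mul_ne_zero hFδ hFμδ), mfact_choose hδμ]
        ring
      unfold Fco
      rw [hs, hmk, E1, E2, hCC, ← hPeq]
      have hPn : poch ((∑ i, κ i) + ↑d + (((∑ i, γ i)+(∑ i, δ i) : ℕ):ℝ))
          ((∑ i, γ i)+(∑ i, δ i)) ≠ 0 := poch_shift_ne ha (le_refl _)
      have hPk : poch ((∑ i, κ i) + ↑d + (((∑ i, γ i)+(∑ i, δ i) : ℕ):ℝ))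
          (∑ i, γ i) ≠ 0 := poch_shift_ne ha (Nat.le_add_right _ _)
      have hL2 : poch ((∑ i, κ i) + ↑d + 1) (2*((∑ i, γ i)+(∑ i, δ i))) ≠ 0 :=
        poch_base_pos_ne (by linarith) _
      have hLm : poch ((∑ i, κ i) + ↑d + 1)
          ((∑ i, γ i)+(∑ i, μ i)+((∑ i, γ i)+(∑ i, δ i))) ≠ 0 :=
        poch_base_pos_ne (by linarith) _
      set s := (-1:ℝ)^(∑ i, γ i) with hsdef
      set u := (-1:ℝ)^(∑ i, μ i) with hudef
      set v := (-1:ℝ)^(∑ i, δ i) with hvdef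
      have he1 : (-1:ℝ)^((∑ i, γ i) + (∑ i, μ i)) = s * u := pow_add _ _ _
      have he2 : (-1:ℝ)^((∑ i, γ i) + (∑ i, δ i)) = s * v := pow_add _ _ _
      have h4 : s^4 = 1 := by
        rw [hsdef, ← pow_mul, mul_comm, pow_mul]
        norm_num
      rw [he1, he2]
      set Fa := mfact α
      set Fmd := mfact (fun i => μ i - δ i)
      set PNm := poch (-(N:ℝ)) ((∑ i, γ i) + (∑ i, μ i))
      set A := pochV (fun i => κ i + 1) α
      set L2 := poch ((∑ i, κ i) + ↑d + 1) (2 * ((∑ i, γ i) + (∑ i, δ i)))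
      set Fb := mfact (fun t => γ t + δ t)
      set PNn := poch (-(N:ℝ)) ((∑ i, γ i) + (∑ i, δ i))
      set Bb := pochV (fun i => κ i + 1) (fun t => γ t + δ t)
      set Lm := poch ((∑ i, κ i) + ↑d + 1) ((∑ i, γ i) + (∑ i, μ i) + ((∑ i, γ i) + (∑ i, δ i)))
      set Pn := poch ((∑ i, κ i) + ↑d + (((∑ i, γ i) + (∑ i, δ i) : ℕ):ℝ)) ((∑ i, γ i) + (∑ i, δ i))
      set Pk := poch ((∑ i, κ i) + ↑d + (((∑ i, γ i) + (∑ i, δ i) : ℕ):ℝ)) (∑ i, γ i)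
      set Fg := mfact γ
      set G := pochV (fun i => κ i + 1) γ
      set PNk := poch (-(N:ℝ)) (∑ i, γ i)
      set Fd := mfact δ
      set Fm := mfact μ
      field_simp
      ring_nf
      rw [h4]
      ring
    rw [Finset.sum_congr rfl hterm, ← Finset.mul_sum]
    rw [group_sum (d+1) μ
      (fun j => (-1:ℝ)^j * eterm ((∑ i, κ i) + ↑d + 2*((∑ i, γ i : ℕ):ℝ)) (∑ i, μ i) j)]
    have hzero : ∑ j ∈ Finset.range ((∑ i, μ i)+1), ((∑ i, μ i).choose j : ℝ) *
        ((-1:ℝ)^j * eterm ((∑ i, κ i) + ↑d + 2*((∑ i, γ i : ℕ):ℝ)) (∑ i, μ i) j) = 0 := by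
      rw [← star hbgt hM1]
      exact Finset.sum_congr rfl fun j _ => by ring
    rw [hzero, mul_zero]


/-- expansion of the shifted monomial `m_α` in monic Hahn polynomials. -/
theorem mono_eq_sum_monicHahn (d N : ℕ) (hd : 1 ≤ d) (κ : Fin (d + 1) → ℝ)
    (hκ : ∀ i, -1 < κ i) (x : Fin (d + 1) → ℕ) (hx : x ∈ ZN d N)
    (α : Fin (d + 1) → ℕ) (hα : ∑ i, α i ≤ N) :
    mono α (fun i => (x i : ℝ)) =
      (-1 : ℝ) ^ (∑ i, α i) *
        ∑ β ∈ below α,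
          pochV (fun i => -(α i : ℝ)) β * poch (-(N : ℝ)) (∑ i, α i) *
              pochV (fun i => κ i + 1) α * poch ((∑ i, κ i) + d + 1) (2 * ∑ i, β i) /
              (mfact β * poch (-(N : ℝ)) (∑ i, β i) * pochV (fun i => κ i + 1) β *
                poch ((∑ i, κ i) + d + 1) ((∑ i, α i) + ∑ i, β i)) *
            monicQ d N κ β (fun i => (x i : ℝ)) := by
  classical
  have hκ1 : ∀ i, (0:ℝ) < κ i + 1 := fun i => by linarith [hκ i]
  have hmain : ∀ β ∈ below α,
      (-1 : ℝ) ^ (∑ i, α i) *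
        (pochV (fun i => -(α i : ℝ)) β * poch (-(N : ℝ)) (∑ i, α i) *
            pochV (fun i => κ i + 1) α * poch ((∑ i, κ i) + d + 1) (2 * ∑ i, β i) /
            (mfact β * poch (-(N : ℝ)) (∑ i, β i) * pochV (fun i => κ i + 1) β *
              poch ((∑ i, κ i) + d + 1) ((∑ i, α i) + ∑ i, β i)) *
          monicQ d N κ β (fun i => (x i : ℝ)))
      = ∑ γ ∈ below α, Fco d N κ α β γ * mono γ (fun i => (x i : ℝ)) := by
    intro β hβ
    have hsub : below β ⊆ below α := fun t ht =>
      mem_below.2 fun i => le_trans (mem_below.1 ht i) (mem_below.1 hβ i)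
    unfold monicQ
    have hz : ∀ γ ∈ below α, γ ∉ below β →
        pochV (fun i => -(β i : ℝ)) γ * poch ((∑ i, κ i) + d + (∑ i, β i)) (∑ i, γ i) *
            (-1 : ℝ) ^ (∑ i, γ i) /
            (mfact γ * pochV (fun i => κ i + 1) γ * poch (-(N : ℝ)) (∑ i, γ i)) *
          mono γ (fun i => (x i : ℝ)) = 0 := by
      intro γ hγα hγβ
      obtain ⟨i, hi⟩ : ∃ i, β i < γ i := by
        by_contra hc
        push_neg at hc
        exact hγβ (mem_below.2 hc)
      rw [pochV_neg_zero (c := β) (g := γ) ⟨i, hi⟩]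
      simp
    rw [Finset.sum_subset hsub hz]
    have hdistr : ∀ (c : ℝ) (f : (Fin (d+1) → ℕ) → ℝ),
        c * ∑ γ ∈ below α, f γ = ∑ γ ∈ below α, c * f γ := fun c f => Finset.mul_sum _ _ _
    rw [hdistr, hdistr, hdistr]
    exact Finset.sum_congr rfl fun γ _ => by unfold Fco; ring
  symm
  calc
    (-1 : ℝ) ^ (∑ i, α i) *
        ∑ β ∈ below α,
          pochV (fun i => -(α i : ℝ)) β * poch (-(N : ℝ)) (∑ i, α i) *
              pochV (fun i => κ i + 1) α * poch ((∑ i, κ i) + d + 1) (2 * ∑ i, β i) /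
              (mfact β * poch (-(N : ℝ)) (∑ i, β i) * pochV (fun i => κ i + 1) β *
                poch ((∑ i, κ i) + d + 1) ((∑ i, α i) + ∑ i, β i)) *
            monicQ d N κ β (fun i => (x i : ℝ))
        = ∑ β ∈ below α, ∑ γ ∈ below α, Fco d N κ α β γ * mono γ (fun i => (x i : ℝ)) := by
          rw [Finset.mul_sum]
          exact Finset.sum_congr rfl hmain
    _ = ∑ γ ∈ below α, ∑ β ∈ below α, Fco d N κ α β γ * mono γ (fun i => (x i : ℝ)) :=
          Finset.sum_comm
    _ = ∑ γ ∈ below α, (∑ β ∈ below α, Fco d N κ α β γ) * mono γ (fun i => (x i : ℝ)) := by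
          exact Finset.sum_congr rfl fun γ _ => (Finset.sum_mul _ _ _).symm
    _ = ∑ γ ∈ below α, (if γ = α then (1:ℝ) else 0) * mono γ (fun i => (x i : ℝ)) := by
          refine Finset.sum_congr rfl fun γ hγm => ?_
          rw [key d N κ hκ α hα γ (mem_below.1 hγm)]
    _ = mono α (fun i => (x i : ℝ)) := by
          simp only [ite_mul, one_mul, zero_mul, Finset.sum_ite_eq']
          rw [if_pos (mem_below.2 fun i => le_refl _)]
end
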